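/- Assume ∫_{[0,1]^d} Ψ(x) dx = 0 and let β := ∫_{[0,1]^d} r(x)·Ψ(x) dx. There exists a constant κ > 0, depending only on E[U⁴], E[V⁴], ‖f‖_∞ and ∫_{[0,1]^d} Ψ(x)² dx, such that for every n ≥ 3, the truncated estimator β̂ := (1/n)·Σ_{i=1}^n Y_i²·Ψ(X_i)·1_{{|Y_i²·Ψ(X_i)| ≤ ρ_n}}, with ρ_n := √(n/ln n), satisfies P(|β̂ − β| ≥ κ·√((ln n)/n)) ≤ 2·n^{−4}. (This is Lemma 3 of the paper under assumption set H1, stated for a general bounded coefficient function Ψ with zero integral.) -/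

import Mathlib

open MeasureTheory ProbabilityTheory

section AuxiliaryLemmasForStatement10
open Real

lemma abs_le_pow4_add_one (u : ℝ) : |u| ≤ u ^ 4 + 1 := by
  rcases le_total (|u|) 1 with h | h
  · nlinarith [sq_nonneg (u^2), sq_abs u, abs_nonneg u, pow_two_nonneg (u^2)]
  · have h1 : |u| ≤ |u| ^ 4 := le_self_pow₀ h (by norm_num)
    have h2 : |u| ^ 4 = u ^ 4 := by
      rw [← abs_pow]; exact abs_of_nonneg (by positivity)
    nlinarith
lemma sq_le_pow4_add_one (u : ℝ) : u ^ 2 ≤ u ^ 4 + 1 := by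
  nlinarith [sq_nonneg (u ^ 2 - 1)]
lemma abs_le_sq_add_one (u : ℝ) : |u| ≤ u ^ 2 + 1 := by
  nlinarith [sq_nonneg (|u| - 1), sq_abs u, abs_nonneg u]
lemma quartic_bound (a b : ℝ) : (a + b) ^ 4 ≤ 8 * (a ^ 4 + b ^ 4) := by
  nlinarith [sq_nonneg (a - b), sq_nonneg (a + b), sq_nonneg (a ^ 2 - b ^ 2),
    sq_nonneg (a ^ 2 + b ^ 2), sq_nonneg ((a+b)^2 - 2*(a^2+b^2))]


lemma exp_le_one_add_add_sq {x : ℝ} (hx : |x| ≤ 1) : Real.exp x ≤ 1 + x + x ^ 2 := by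
  have h := Real.exp_bound hx (by norm_num : 0 < 2)
  have h2 : Real.exp x - (1 + x) ≤ |x| ^ 2 * (3 / (2 * 2)) := by
    have := (abs_sub_le_iff.1 h).1
    simpa [Finset.sum_range_succ, Nat.factorial] using this
  have h3 : |x| ^ 2 = x ^ 2 := sq_abs x
  nlinarith [sq_nonneg x]

lemma bernstein_chernoff {Ω : Type*} [MeasurableSpace Ω] (P : Measure Ω) [IsProbabilityMeasure P]
    {n : ℕ} (Z : Fin n → Ω → ℝ) (hmeas : ∀ i, Measurable (Z i))
    (hindep : iIndepFun Z P)
    {b v : ℝ} (hb : 0 < b) (hv : 1 ≤ v)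
    (hbd : ∀ i ω, |Z i ω| ≤ b)
    (hmean : ∀ i, ∫ ω, Z i ω ∂P = 0)
    (hvar : ∀ i, ∫ ω, (Z i ω) ^ 2 ∂P ≤ v)
    {t : ℝ} (ht : 0 ≤ t) :
    (P {ω | (n : ℝ) * t ≤ ∑ i, Z i ω}).toReal ≤
      Real.exp (-((n : ℝ) * min (t ^ 2 / (8 * v)) (t / (2 * b)))) := by
  have hv0 : (0:ℝ) < v := lt_of_lt_of_le one_pos hv
  set lam := min (t / (4 * v)) (1 / b) with hlam
  have hlam0 : 0 ≤ lam := le_min (by positivity) (by positivity)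
  have hlamb : lam * b ≤ 1 := by
    have : lam ≤ 1 / b := min_le_right _ _
    calc lam * b ≤ (1 / b) * b := by gcongr
    _ = 1 := by field_simp
  -- integrability of exp (lam * Z i)
  have hZint : ∀ i, Integrable (Z i) P := fun i =>
    (integrable_const b).mono' (hmeas i).aestronglyMeasurable
      (Filter.Eventually.of_forall fun ω => by simpa using hbd i ω)
  have hZ2int : ∀ i, Integrable (fun ω => (Z i ω) ^ 2) P := fun i =>
    (integrable_const (b ^ 2)).mono' ((hmeas i).pow_const 2).aestronglyMeasurable
      (Filter.Eventually.of_forall fun ω => by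
        have h := hbd i ω
        have h2 : |Z i ω| ^ 2 ≤ b ^ 2 := by
          have := abs_nonneg (Z i ω); nlinarith
        simpa [abs_pow, sq_abs] using h2)
  have hexpint : ∀ i, Integrable (fun ω => Real.exp (lam * Z i ω)) P := by
    intro i
    refine (integrable_const (Real.exp (lam * b))).mono'
      (((hmeas i).const_mul lam).exp).aestronglyMeasurable
      (Filter.Eventually.of_forall fun ω => ?_)
    have : lam * Z i ω ≤ lam * b := by
      have := (abs_le.1 (hbd i ω)).2
      exact mul_le_mul_of_nonneg_left this hlam0
    simpa [abs_of_pos (Real.exp_pos _)] using Real.exp_le_exp.2 this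
  -- per-variable mgf bound
  have hmgf : ∀ i, mgf (Z i) P lam ≤ Real.exp (lam ^ 2 * v) := by
    intro i
    have hptwise : ∀ ω, Real.exp (lam * Z i ω) ≤ 1 + lam * Z i ω + (lam * Z i ω) ^ 2 := by
      intro ω
      refine exp_le_one_add_add_sq ?_
      rw [abs_mul, abs_of_nonneg hlam0]
      calc lam * |Z i ω| ≤ lam * b := by gcongr; exact hbd i ω
        _ ≤ 1 := hlamb
    have i1 : Integrable (fun ω => 1 + lam * Z i ω) P :=
      (integrable_const 1).add ((hZint i).const_mul lam)
    have i2 : Integrable (fun ω => (lam * Z i ω) ^ 2) P := by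
      simpa [mul_pow] using ((hZ2int i).const_mul (lam ^ 2))
    have h1 : mgf (Z i) P lam ≤ ∫ ω, (1 + lam * Z i ω + (lam * Z i ω) ^ 2) ∂P :=
      integral_mono (hexpint i) (i1.add i2) hptwise
    have h2 : ∫ ω, (1 + lam * Z i ω + (lam * Z i ω) ^ 2) ∂P
        = 1 + lam ^ 2 * ∫ ω, (Z i ω) ^ 2 ∂P := by
      rw [integral_add i1 i2, integral_add (integrable_const 1) ((hZint i).const_mul lam)]
      simp [integral_const_mul, hmean i, mul_pow]
    have h3 : 1 + lam ^ 2 * ∫ ω, (Z i ω) ^ 2 ∂P ≤ 1 + lam ^ 2 * v := by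
      have hq := hvar i
      nlinarith [sq_nonneg lam]
    calc mgf (Z i) P lam ≤ 1 + lam ^ 2 * v := by linarith [h1, h2.le, h2.ge, h3]
      _ ≤ Real.exp (lam ^ 2 * v) := by
        have := Real.add_one_le_exp (lam ^ 2 * v); linarith
  -- Chernoff
  have hsumint : Integrable (fun ω => Real.exp (lam * (∑ i, Z i ω))) P := by
    refine (integrable_const (Real.exp (lam * (n * b)))).mono'
      ((Finset.measurable_sum _ fun i _ => hmeas i).const_mul lam).exp.aestronglyMeasurable
      (Filter.Eventually.of_forall fun ω => ?_)
    have hsb : (∑ i, Z i ω) ≤ n * b := by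
      calc (∑ i, Z i ω) ≤ ∑ i : Fin n, b := Finset.sum_le_sum fun i _ => (abs_le.1 (hbd i ω)).2
        _ = n * b := by simp [Finset.sum_const, mul_comm]
    have : lam * (∑ i, Z i ω) ≤ lam * (n * b) := mul_le_mul_of_nonneg_left hsb hlam0
    simpa [abs_of_pos (Real.exp_pos _)] using Real.exp_le_exp.2 this
  have hch := measure_ge_le_exp_mul_mgf (μ := P) (X := fun ω => ∑ i, Z i ω)
    ((n : ℝ) * t) hlam0 (by simpa using hsumint)
  have hmgfsum : mgf (fun ω => ∑ i, Z i ω) P lam ≤ Real.exp ((n : ℝ) * (lam ^ 2 * v)) := by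
    have heq : mgf (∑ i, Z i) P lam = ∏ i, mgf (Z i) P lam := hindep.mgf_sum hmeas Finset.univ
    have : mgf (fun ω => ∑ i, Z i ω) P lam = ∏ i, mgf (Z i) P lam := by
      rw [← heq]; congr 1; ext ω; simp
    rw [this]
    calc (∏ i : Fin n, mgf (Z i) P lam) ≤ ∏ i : Fin n, Real.exp (lam ^ 2 * v) :=
        Finset.prod_le_prod (fun i _ => mgf_nonneg) (fun i _ => hmgf i)
      _ = Real.exp ((n : ℝ) * (lam ^ 2 * v)) := by
        simp [Finset.prod_const, ← Real.exp_nat_mul]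
  have key : Real.exp (-lam * ((n : ℝ) * t)) * mgf (fun ω => ∑ i, Z i ω) P lam
      ≤ Real.exp (-((n : ℝ) * min (t ^ 2 / (8 * v)) (t / (2 * b)))) := by
    calc Real.exp (-lam * ((n : ℝ) * t)) * mgf (fun ω => ∑ i, Z i ω) P lam
        ≤ Real.exp (-lam * ((n : ℝ) * t)) * Real.exp ((n : ℝ) * (lam ^ 2 * v)) :=
          mul_le_mul_of_nonneg_left hmgfsum (Real.exp_pos _).le
      _ = Real.exp (-lam * ((n : ℝ) * t) + (n : ℝ) * (lam ^ 2 * v)) := (Real.exp_add _ _).symm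
      _ ≤ Real.exp (-((n : ℝ) * min (t ^ 2 / (8 * v)) (t / (2 * b)))) := by
          rw [Real.exp_le_exp]
          rcases le_total (t / (4 * v)) (1 / b) with hc | hc
          · have hlameq : lam = t / (4 * v) := min_eq_left hc
            have hmin : min (t ^ 2 / (8 * v)) (t / (2 * b)) ≤ t ^ 2 / (8 * v) := min_le_left _ _
            rw [hlameq]
            have hn0 : (0:ℝ) ≤ (n:ℝ) := Nat.cast_nonneg n
            have e1 : -(t / (4 * v)) * ((n : ℝ) * t) + (n : ℝ) * ((t / (4 * v)) ^ 2 * v)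
                = -((n : ℝ) * (3 * t ^ 2 / (16 * v))) := by field_simp <;> ring
            rw [e1]
            have : (n : ℝ) * min (t ^ 2 / (8 * v)) (t / (2 * b)) ≤ (n:ℝ) * (3 * t ^ 2 / (16 * v)) := by
              refine mul_le_mul_of_nonneg_left (hmin.trans ?_) hn0
              rw [div_le_div_iff₀ (by positivity) (by positivity)]
              nlinarith [sq_nonneg t, hv0]
            linarith
          · have hlameq : lam = 1 / b := min_eq_right hc
            have hvt : 4 * v ≤ t * b := by
              rw [div_le_div_iff₀ hb (by positivity)] at hc
              linarith
            rw [hlameq]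
            have hn0 : (0:ℝ) ≤ (n:ℝ) := Nat.cast_nonneg n
            have e1 : -(1 / b) * ((n : ℝ) * t) + (n : ℝ) * ((1 / b) ^ 2 * v)
                = (n : ℝ) * (-(t / b) + v / b ^ 2) := by field_simp
            rw [e1]
            have h2 : -(t / b) + v / b ^ 2 ≤ -(t / (2 * b)) := by
              have key : v / b ^ 2 ≤ t / (2 * b) := by
                rw [div_le_div_iff₀ (by positivity) (by positivity)]
                nlinarith [mul_le_mul_of_nonneg_right hvt hb.le, mul_pos hv0 hb]
              have h3 : t / (2 * b) + t / (2 * b) = t / b := by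
                field_simp
                ring
              linarith
            have : (n : ℝ) * min (t ^ 2 / (8 * v)) (t / (2 * b)) ≤ (n:ℝ) * (t / (2*b)) :=
              mul_le_mul_of_nonneg_left (min_le_right _ _) hn0
            nlinarith [mul_le_mul_of_nonneg_left h2 hn0]
  exact hch.trans key

end AuxiliaryLemmasForStatement10

set_option maxHeartbeats 1600000 in
/-- Lemma 3 of the paper, assumption set H1.
Assume `∫ Ψ = 0` and let `β = ∫ r Ψ`. There is a constant `κ > 0` (depending only
on the fixed quantities of the model, in particular on `E[U⁴]`, `E[V⁴]`, `‖f‖_∞`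
and `∫ Ψ²`, but not on `n` or on the i.i.d. sample) such that for every `n ≥ 3`,
the truncated estimator `β̂ = (1/n) Σᵢ Yᵢ² Ψ(Xᵢ) 1_{|Yᵢ² Ψ(Xᵢ)| ≤ ρₙ}` with
`ρₙ = √(n / ln n)` satisfies `P(|β̂ − β| ≥ κ √((ln n)/n)) ≤ 2 n⁻⁴`. -/
theorem truncated_coefficient_concentration_H1
    {Ω : Type*} [MeasurableSpace Ω] (P : Measure Ω) [IsProbabilityMeasure P]
    (d : ℕ) (hd : 1 ≤ d)
    (X : Ω → (Fin d → ℝ)) (U V : Ω → ℝ)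
    (hXm : Measurable X) (hUm : Measurable U) (hVm : Measurable V)
    -- X is uniformly distributed on the cube [0,1]^d
    (hXlaw : Measure.map X P = volume.restrict (Set.Icc (0 : Fin d → ℝ) 1))
    -- E[U⁴] < ∞ and E[V⁴] < ∞
    (hU4 : Integrable (fun ω => (U ω) ^ 4) P)
    (hV4 : Integrable (fun ω => (V ω) ^ 4) P)
    -- X, U, V mutually independent
    (hXU : IndepFun X U P)
    (hXUV : IndepFun (fun ω => (X ω, U ω)) V P)
    -- f bounded measurable on the cube, r = f²
    (f : (Fin d → ℝ) → ℝ) (hfm : Measurable f)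
    (Cf : ℝ) (hf : ∀ x ∈ Set.Icc (0 : Fin d → ℝ) 1, |f x| ≤ Cf)
    (r : (Fin d → ℝ) → ℝ) (hr : ∀ x, r x = (f x) ^ 2)
    -- E[U²] = 1 and (E[U] = 0 or E[V] = 0)
    (hU2int : Integrable (fun ω => (U ω) ^ 2) P)
    (hU2 : ∫ ω, (U ω) ^ 2 ∂P = 1)
    (hcent : (∫ ω, U ω ∂P = 0) ∨ (∫ ω, V ω ∂P = 0))
    -- Ψ bounded measurable on the cube with zero integral
    (Ψ : (Fin d → ℝ) → ℝ) (hΨm : Measurable Ψ)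
    (CΨ : ℝ) (hΨ : ∀ x ∈ Set.Icc (0 : Fin d → ℝ) 1, |Ψ x| ≤ CΨ)
    (hΨ0 : ∫ x in Set.Icc (0 : Fin d → ℝ) 1, Ψ x = 0) :
    ∃ κ : ℝ, 0 < κ ∧
      ∀ (n : ℕ), 3 ≤ n →
        ∀ (Xs : Fin n → Ω → (Fin d → ℝ)) (Us Vs : Fin n → Ω → ℝ),
          (∀ i, Measurable (Xs i)) → (∀ i, Measurable (Us i)) →
          (∀ i, Measurable (Vs i)) →
          iIndepFun
            (fun i ω => (Xs i ω, Us i ω, Vs i ω)) P →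
          (∀ i, IdentDistrib (fun ω => (Xs i ω, Us i ω, Vs i ω))
            (fun ω => (X ω, U ω, V ω)) P P) →
          P {ω | κ * Real.sqrt (Real.log n / n)
                  ≤ |(1 / (n : ℝ)) * (∑ i,
                        if |(f (Xs i ω) * Us i ω + Vs i ω) ^ 2 * Ψ (Xs i ω)|
                            ≤ Real.sqrt ((n : ℝ) / Real.log n)
                          then (f (Xs i ω) * Us i ω + Vs i ω) ^ 2 * Ψ (Xs i ω)
                          else 0)
                      - ∫ x in Set.Icc (0 : Fin d → ℝ) 1, r x * Ψ x|}
            ≤ ENNReal.ofReal (2 / (n : ℝ) ^ 4) := by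
  classical
  have hIccMeas : MeasurableSet (Set.Icc (0 : Fin d → ℝ) 1) := measurableSet_Icc
  -- X lands in the cube a.s.
  have hcube : ∀ᵐ ω ∂P, X ω ∈ Set.Icc (0 : Fin d → ℝ) 1 := by
    rw [ae_iff]
    have h1 : {ω | ¬ X ω ∈ Set.Icc (0 : Fin d → ℝ) 1}
        = X ⁻¹' (Set.Icc (0 : Fin d → ℝ) 1)ᶜ := rfl
    rw [h1, ← Measure.map_apply hXm hIccMeas.compl, hXlaw,
      Measure.restrict_apply hIccMeas.compl]
    simp
  have h0mem : (0 : Fin d → ℝ) ∈ Set.Icc (0 : Fin d → ℝ) 1 :=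
    ⟨le_rfl, fun _ => zero_le_one⟩
  have hCf0 : 0 ≤ Cf := (abs_nonneg _).trans (hf 0 h0mem)
  have hCΨ0 : 0 ≤ CΨ := (abs_nonneg _).trans (hΨ 0 h0mem)
  -- basic integrability
  have hUint : Integrable U P :=
    (hU4.add (integrable_const 1)).mono' hUm.aestronglyMeasurable
      (Filter.Eventually.of_forall fun ω => by
        simpa using abs_le_pow4_add_one (U ω))
  have hVint : Integrable V P :=
    (hV4.add (integrable_const 1)).mono' hVm.aestronglyMeasurable
      (Filter.Eventually.of_forall fun ω => by
        simpa using abs_le_pow4_add_one (V ω))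
  have hV2int : Integrable (fun ω => (V ω) ^ 2) P :=
    (hV4.add (integrable_const 1)).mono' (hVm.pow_const 2).aestronglyMeasurable
      (Filter.Eventually.of_forall fun ω => by
        have := sq_le_pow4_add_one (V ω)
        simpa [abs_of_nonneg (sq_nonneg (V ω))] using this)
  -- the basic random variable
  set W0 : Ω → ℝ := fun ω => (f (X ω) * U ω + V ω) ^ 2 * Ψ (X ω) with hW0def
  have hW0m : Measurable W0 :=
    ((((hfm.comp hXm).mul hUm).add hVm).pow_const 2).mul (hΨm.comp hXm)
  -- second moment control
  have hW2bd : ∀ᵐ ω ∂P, (W0 ω) ^ 2 ≤ CΨ ^ 2 * 8 * (Cf ^ 4 * (U ω) ^ 4 + (V ω) ^ 4) := by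
    filter_upwards [hcube] with ω hω
    have hfb : |f (X ω)| ≤ Cf := hf _ hω
    have hΨb : |Ψ (X ω)| ≤ CΨ := hΨ _ hω
    have h1 : (f (X ω) * U ω + V ω) ^ 4 ≤ 8 * ((f (X ω) * U ω) ^ 4 + (V ω) ^ 4) :=
      quartic_bound _ _
    have h2 : (f (X ω) * U ω) ^ 4 ≤ Cf ^ 4 * (U ω) ^ 4 := by
      have : (f (X ω)) ^ 4 ≤ Cf ^ 4 := by
        calc (f (X ω)) ^ 4 = |f (X ω)| ^ 4 := by
              rw [← abs_pow]; exact (abs_of_nonneg (by positivity)).symm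
          _ ≤ Cf ^ 4 := by gcongr
      calc (f (X ω) * U ω) ^ 4 = (f (X ω)) ^ 4 * (U ω) ^ 4 := by ring
        _ ≤ Cf ^ 4 * (U ω) ^ 4 := by
            exact mul_le_mul_of_nonneg_right this (by positivity)
    have h3 : (Ψ (X ω)) ^ 2 ≤ CΨ ^ 2 := by
      rw [← sq_abs]; gcongr
    have h4 : (W0 ω) ^ 2 = (f (X ω) * U ω + V ω) ^ 4 * (Ψ (X ω)) ^ 2 := by
      simp only [hW0def]; ring
    have h5 : (0:ℝ) ≤ (f (X ω) * U ω + V ω) ^ 4 := by positivity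
    calc (W0 ω) ^ 2 = (f (X ω) * U ω + V ω) ^ 4 * (Ψ (X ω)) ^ 2 := h4
      _ ≤ (f (X ω) * U ω + V ω) ^ 4 * CΨ ^ 2 := mul_le_mul_of_nonneg_left h3 h5
      _ ≤ (8 * ((f (X ω) * U ω) ^ 4 + (V ω) ^ 4)) * CΨ ^ 2 := by
          exact mul_le_mul_of_nonneg_right h1 (by positivity)
      _ ≤ (8 * (Cf ^ 4 * (U ω) ^ 4 + (V ω) ^ 4)) * CΨ ^ 2 := by
          have : (f (X ω) * U ω) ^ 4 + (V ω) ^ 4 ≤ Cf ^ 4 * (U ω) ^ 4 + (V ω) ^ 4 := by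
            linarith
          nlinarith [sq_nonneg CΨ]
      _ = CΨ ^ 2 * 8 * (Cf ^ 4 * (U ω) ^ 4 + (V ω) ^ 4) := by ring
  have hW2int : Integrable (fun ω => (W0 ω) ^ 2) P := by
    refine (((hU4.const_mul (Cf ^ 4)).add hV4).const_mul (CΨ ^ 2 * 8)).mono'
      (hW0m.pow_const 2).aestronglyMeasurable ?_
    filter_upwards [hW2bd] with ω hω
    simpa [abs_of_nonneg (sq_nonneg (W0 ω)), mul_assoc] using hω
  have hW0int : Integrable W0 P :=
    (hW2int.add (integrable_const 1)).mono' hW0m.aestronglyMeasurable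
      (Filter.Eventually.of_forall fun ω => by
        simpa using abs_le_sq_add_one (W0 ω))
  set M : ℝ := ∫ ω, (W0 ω) ^ 2 ∂P with hMdef
  have hM0 : 0 ≤ M := integral_nonneg fun ω => sq_nonneg _
  -- mean computation : ∫ W0 = β
  set β : ℝ := ∫ x in Set.Icc (0 : Fin d → ℝ) 1, r x * Ψ x with hβdef
  have hmean : ∫ ω, W0 ω ∂P = β := by
    set gA : (Fin d → ℝ) → ℝ := fun x => (f x) ^ 2 * Ψ x with hgA
    set gB : (Fin d → ℝ) → ℝ := fun x => f x * Ψ x with hgB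
    have hgAm : Measurable gA := (hfm.pow_const 2).mul hΨm
    have hgBm : Measurable gB := hfm.mul hΨm
    have hgAXint : Integrable (fun ω => gA (X ω)) P := by
      refine (integrable_const (Cf ^ 2 * CΨ)).mono'
        (hgAm.comp hXm).aestronglyMeasurable ?_
      filter_upwards [hcube] with ω hω
      have h1 := hf _ hω
      have h2 := hΨ _ hω
      have : |gA (X ω)| = |f (X ω)| ^ 2 * |Ψ (X ω)| := by
        simp [hgA, abs_mul, sq_abs, abs_pow]
      rw [Real.norm_eq_abs, this]
      have hb : |f (X ω)| ^ 2 ≤ Cf ^ 2 := by gcongr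
      exact mul_le_mul hb h2 (abs_nonneg _) (by positivity)
    have hgBXint : Integrable (fun ω => gB (X ω)) P := by
      refine (integrable_const (Cf * CΨ)).mono'
        (hgBm.comp hXm).aestronglyMeasurable ?_
      filter_upwards [hcube] with ω hω
      have h1 := hf _ hω
      have h2 := hΨ _ hω
      rw [Real.norm_eq_abs, hgB]
      calc |f (X ω) * Ψ (X ω)| = |f (X ω)| * |Ψ (X ω)| := abs_mul _ _
        _ ≤ Cf * CΨ := mul_le_mul h1 h2 (abs_nonneg _) hCf0
    have hΨXint : Integrable (fun ω => Ψ (X ω)) P := by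
      refine (integrable_const CΨ).mono'
        (hΨm.comp hXm).aestronglyMeasurable ?_
      filter_upwards [hcube] with ω hω
      simpa using hΨ _ hω
    -- independence of the pieces
    have hIndA : IndepFun (fun ω => gA (X ω)) (fun ω => (U ω) ^ 2) P :=
      hXU.comp hgAm (measurable_id.pow_const 2)
    have hIndfΨU : IndepFun (fun ω => gB (X ω)) U P := hXU.comp hgBm measurable_id
    have hfΨUint : Integrable (fun ω => gB (X ω) * U ω) P :=
      hIndfΨU.integrable_mul hgBXint hUint
    have hIndB : IndepFun (fun ω => gB (X ω) * U ω) V P :=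
      hXUV.comp ((hgBm.comp measurable_fst).mul measurable_snd) measurable_id
    have hIndC : IndepFun (fun ω => Ψ (X ω)) (fun ω => (V ω) ^ 2) P :=
      hXUV.comp (hΨm.comp measurable_fst) (measurable_id.pow_const 2)
    -- integral identities
    have hAeq : ∫ ω, gA (X ω) * (U ω) ^ 2 ∂P
        = (∫ ω, gA (X ω) ∂P) * ∫ ω, (U ω) ^ 2 ∂P :=
      hIndA.integral_mul_eq_mul_integral hgAXint.aestronglyMeasurable hU2int.aestronglyMeasurable
    have hBeq : ∫ ω, gB (X ω) * U ω * V ω ∂P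
        = ((∫ ω, gB (X ω) ∂P) * ∫ ω, U ω ∂P) * ∫ ω, V ω ∂P := by
      have h1 : ∫ ω, gB (X ω) * U ω * V ω ∂P
          = (∫ ω, gB (X ω) * U ω ∂P) * ∫ ω, V ω ∂P :=
        hIndB.integral_mul_eq_mul_integral hfΨUint.aestronglyMeasurable hVint.aestronglyMeasurable
      have h2 : ∫ ω, gB (X ω) * U ω ∂P = (∫ ω, gB (X ω) ∂P) * ∫ ω, U ω ∂P :=
        hIndfΨU.integral_mul_eq_mul_integral hgBXint.aestronglyMeasurable hUint.aestronglyMeasurable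
      rw [h1, h2]
    have hCeq : ∫ ω, Ψ (X ω) * (V ω) ^ 2 ∂P
        = (∫ ω, Ψ (X ω) ∂P) * ∫ ω, (V ω) ^ 2 ∂P :=
      hIndC.integral_mul_eq_mul_integral hΨXint.aestronglyMeasurable hV2int.aestronglyMeasurable
    have hΨXzero : ∫ ω, Ψ (X ω) ∂P = 0 := by
      have h : ∫ ω, Ψ (X ω) ∂P = ∫ x, Ψ x ∂(Measure.map X P) :=
        (integral_map hXm.aemeasurable hΨm.aestronglyMeasurable).symm
      rw [h, hXlaw]
      exact hΨ0
    have hgAmap : ∫ ω, gA (X ω) ∂P = β := by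
      have : ∫ ω, gA (X ω) ∂P = ∫ x, gA x ∂(Measure.map X P) :=
        (integral_map hXm.aemeasurable hgAm.aestronglyMeasurable).symm
      rw [this, hXlaw, hβdef]
      refine setIntegral_congr_fun hIccMeas fun x _ => ?_
      simp [hgA, hr x]
    -- cross term vanishes
    have hcross : ((∫ ω, gB (X ω) ∂P) * ∫ ω, U ω ∂P) * ∫ ω, V ω ∂P = 0 := by
      rcases hcent with h | h
      · rw [h]; ring
      · rw [h]; ring
    -- integrability of the pieces
    have hAint : Integrable (fun ω => gA (X ω) * (U ω) ^ 2) P :=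
      hIndA.integrable_mul hgAXint hU2int
    have hBint : Integrable (fun ω => gB (X ω) * U ω * V ω) P :=
      hIndB.integrable_mul hfΨUint hVint
    have hCint : Integrable (fun ω => Ψ (X ω) * (V ω) ^ 2) P :=
      hIndC.integrable_mul hΨXint hV2int
    have hsplit : ∫ ω, W0 ω ∂P = ∫ ω, (gA (X ω) * (U ω) ^ 2
        + (2 * (gB (X ω) * U ω * V ω) + Ψ (X ω) * (V ω) ^ 2)) ∂P := by
      refine integral_congr_ae (Filter.Eventually.of_forall fun ω => ?_)
      simp only [hW0def, hgA, hgB]; ring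
    have hB2int : Integrable (fun ω => 2 * (gB (X ω) * U ω * V ω)) P :=
      hBint.const_mul 2
    have hBCint : Integrable
        (fun ω => 2 * (gB (X ω) * U ω * V ω) + Ψ (X ω) * (V ω) ^ 2) P :=
      hB2int.add hCint
    rw [hsplit, integral_add hAint hBCint, integral_add hB2int hCint,
      integral_const_mul, hAeq, hBeq, hCeq, hcross, hΨXzero, hgAmap, hU2]
    ring
  -- the constants
  set v : ℝ := M + 1 with hvdef
  have hv1 : 1 ≤ v := by simp [hvdef]; linarith
  have hv0 : 0 < v := lt_of_lt_of_le one_pos hv1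
  set c : ℝ := 32 * v + 16 with hcdef
  have hc16 : 16 ≤ c := by nlinarith
  have hc0 : 0 < c := by linarith
  refine ⟨v + c, by positivity, ?_⟩
  intro n hn3 Xs Us Vs hXsm hUsm hVsm hiid hid
  have hn3' : (3:ℝ) ≤ (n:ℝ) := by exact_mod_cast hn3
  have hn0 : (0:ℝ) < (n:ℝ) := by linarith
  set L : ℝ := Real.log n with hLdef
  have hL1 : 1 < L := by
    rw [hLdef, Real.lt_log_iff_exp_lt hn0]
    calc Real.exp 1 ≤ 2.7182818286 := Real.exp_one_lt_d9.le
      _ < 3 := by norm_num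
      _ ≤ (n:ℝ) := hn3'
  have hL0 : 0 < L := lt_trans one_pos hL1
  set ρ : ℝ := Real.sqrt ((n:ℝ) / L) with hρdef
  set s : ℝ := Real.sqrt (L / (n:ℝ)) with hsdef
  have hρ0 : 0 < ρ := Real.sqrt_pos.2 (by positivity)
  have hs0 : 0 < s := Real.sqrt_pos.2 (by positivity)
  have hρs : ρ * s = 1 := by
    rw [hρdef, hsdef, ← Real.sqrt_mul (by positivity)]
    rw [show (n:ℝ)/L * (L/(n:ℝ)) = 1 by field_simp]
    exact Real.sqrt_one
  have hsinv : s = 1 / ρ := eq_one_div_of_mul_eq_one_left (by rw [mul_comm]; exact hρs)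
  have hρinv : ρ = 1 / s := eq_one_div_of_mul_eq_one_left hρs
  have hs_sq : s ^ 2 = L / (n:ℝ) := Real.sq_sqrt (by positivity)
  -- the truncated model variable
  set T0 : Ω → ℝ := fun ω => if |W0 ω| ≤ ρ then W0 ω else 0 with hT0def
  have hT0m : Measurable T0 :=
    Measurable.ite (measurableSet_le hW0m.abs measurable_const) hW0m measurable_const
  have hT0bd : ∀ ω, |T0 ω| ≤ ρ := by
    intro ω; rw [hT0def]; dsimp only
    split_ifs with h
    · exact h
    · simpa using hρ0.le
  have hT0int : Integrable T0 P :=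
    (integrable_const ρ).mono' hT0m.aestronglyMeasurable
      (Filter.Eventually.of_forall fun ω => by simpa using hT0bd ω)
  set μT : ℝ := ∫ ω, T0 ω ∂P with hμTdef
  have hμTbd : |μT| ≤ ρ := by
    have h := norm_integral_le_of_norm_le_const (μ := P) (f := T0) (C := ρ)
      (Filter.Eventually.of_forall fun ω => by simpa using hT0bd ω)
    simpa [hμTdef] using h
  -- truncation bias
  have hT0W0 : ∀ ω, |T0 ω - W0 ω| ≤ (W0 ω) ^ 2 / ρ := by
    intro ω; rw [hT0def]; dsimp only
    split_ifs with h
    · simp only [sub_self, abs_zero]; positivity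
    · push_neg at h
      rw [zero_sub, abs_neg, le_div_iff₀ hρ0]
      calc |W0 ω| * ρ ≤ |W0 ω| * |W0 ω| := by gcongr
        _ = (W0 ω) ^ 2 := by rw [← sq_abs]; ring
  have hbias : |μT - ∫ ω, W0 ω ∂P| ≤ M * s := by
    have h1 : μT - ∫ ω, W0 ω ∂P = ∫ ω, (T0 ω - W0 ω) ∂P :=
      (integral_sub hT0int hW0int).symm
    rw [h1]
    have h2 : |∫ ω, (T0 ω - W0 ω) ∂P| ≤ ∫ ω, |T0 ω - W0 ω| ∂P := by
      simpa [Real.norm_eq_abs] using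
        norm_integral_le_integral_norm (μ := P) (fun ω => T0 ω - W0 ω)
    have h3 : ∫ ω, |T0 ω - W0 ω| ∂P ≤ ∫ ω, (W0 ω) ^ 2 / ρ ∂P :=
      integral_mono (hT0int.sub hW0int).abs (hW2int.div_const ρ)
        (fun ω => hT0W0 ω)
    have h4 : ∫ ω, (W0 ω) ^ 2 / ρ ∂P = M / ρ := by rw [integral_div]
    have h5 : M / ρ = M * s := by rw [hsinv]; ring
    linarith
  -- the sample variables
  set w : (Fin d → ℝ) × ℝ × ℝ → ℝ :=
    fun p => (f p.1 * p.2.1 + p.2.2) ^ 2 * Ψ p.1 with hwdef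
  have hwm : Measurable w :=
    ((((hfm.comp measurable_fst).mul (measurable_fst.comp measurable_snd)).add
      (measurable_snd.comp measurable_snd)).pow_const 2).mul (hΨm.comp measurable_fst)
  set g : (Fin d → ℝ) × ℝ × ℝ → ℝ :=
    fun p => (if |w p| ≤ ρ then w p else 0) - μT with hgdef
  have hgm : Measurable g :=
    (Measurable.ite (measurableSet_le hwm.abs measurable_const) hwm
      measurable_const).sub measurable_const
  set Z : Fin n → Ω → ℝ := fun i ω => g (Xs i ω, Us i ω, Vs i ω) with hZdef
  have hZm : ∀ i, Measurable (Z i) := fun i =>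
    hgm.comp ((hXsm i).prodMk ((hUsm i).prodMk (hVsm i)))
  have hZindep : iIndepFun Z P :=
    hiid.comp (fun _ => g) (fun _ => hgm)
  have hZid : ∀ i, IdentDistrib (Z i) (fun ω => g (X ω, U ω, V ω)) P P :=
    fun i => (hid i).comp hgm
  have hZ0eq : (fun ω => g (X ω, U ω, V ω)) = fun ω => T0 ω - μT := rfl
  have hZ0mean : ∫ ω, (T0 ω - μT) ∂P = 0 := by
    rw [integral_sub hT0int (integrable_const μT)]
    simp [hμTdef]
  have hZmean : ∀ i, ∫ ω, Z i ω ∂P = 0 := by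
    intro i
    have h := (hZid i).integral_eq
    rw [hZ0eq] at h
    rw [h]; exact hZ0mean
  have hT02int : Integrable (fun ω => (T0 ω) ^ 2) P :=
    (integrable_const (ρ ^ 2)).mono' (hT0m.pow_const 2).aestronglyMeasurable
      (Filter.Eventually.of_forall fun ω => by
        have := hT0bd ω
        have h2 : |T0 ω| ^ 2 ≤ ρ ^ 2 := by gcongr
        simpa [abs_of_nonneg (sq_nonneg (T0 ω)), sq_abs] using h2)
  have hT02leM : ∫ ω, (T0 ω) ^ 2 ∂P ≤ M := by
    refine integral_mono hT02int hW2int fun ω => ?_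
    rw [hT0def]; dsimp only
    split_ifs
    · exact le_rfl
    · simpa using sq_nonneg (W0 ω)
  have hZ0var : ∫ ω, (T0 ω - μT) ^ 2 ∂P ≤ v := by
    have hc1 : Integrable (fun ω => 2 * μT * T0 ω) P := (hT0int.const_mul _)
    have hexp : ∫ ω, (T0 ω - μT) ^ 2 ∂P
        = ∫ ω, ((T0 ω) ^ 2 - 2 * μT * T0 ω + μT ^ 2) ∂P := by
      refine integral_congr_ae (Filter.Eventually.of_forall fun ω => ?_)
      ring
    have h2 : Integrable (fun ω => (T0 ω) ^ 2 - 2 * μT * T0 ω) P := hT02int.sub hc1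
    rw [hexp, integral_add h2 (integrable_const (μT ^ 2)),
      integral_sub hT02int hc1, integral_const_mul, integral_const]
    have hμ : ∫ a, T0 a ∂P = μT := rfl
    simp only [measure_univ, ENNReal.toReal_one, smul_eq_mul, one_mul, probReal_univ, hμ]
    have := hT02leM
    rw [hvdef]
    linarith [sq_nonneg μT, hT02leM]
  have hZvar : ∀ i, ∫ ω, (Z i ω) ^ 2 ∂P ≤ v := by
    intro i
    have h : ∫ ω, (Z i ω) ^ 2 ∂P = ∫ ω, (T0 ω - μT) ^ 2 ∂P := by
      have hh := ((hZid i).comp (measurable_id.pow_const 2)).integral_eq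
      calc ∫ ω, (Z i ω) ^ 2 ∂P = ∫ ω, ((fun x : ℝ => x ^ 2) ∘ Z i) ω ∂P := rfl
        _ = ∫ ω, ((fun x : ℝ => x ^ 2) ∘ fun ω => g (X ω, U ω, V ω)) ω ∂P := hh
        _ = ∫ ω, (T0 ω - μT) ^ 2 ∂P := by
            rw [hZ0eq]; simp only [Function.comp_apply]
    rw [h]; exact hZ0var
  have hZbd : ∀ i ω, |Z i ω| ≤ 2 * ρ := by
    intro i ω
    have h1 : |(if |w (Xs i ω, Us i ω, Vs i ω)| ≤ ρ
        then w (Xs i ω, Us i ω, Vs i ω) else 0)| ≤ ρ := by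
      split_ifs with h
      · exact h
      · simpa using hρ0.le
    calc |Z i ω| ≤ |(if |w (Xs i ω, Us i ω, Vs i ω)| ≤ ρ
          then w (Xs i ω, Us i ω, Vs i ω) else 0)| + |μT| := by
          rw [hZdef]; dsimp only; rw [hgdef]
          exact (abs_sub _ _)
      _ ≤ ρ + ρ := add_le_add h1 hμTbd
      _ = 2 * ρ := by ring
  -- negated variables
  set Z' : Fin n → Ω → ℝ := fun i ω => - Z i ω with hZ'def
  have hZ'm : ∀ i, Measurable (Z' i) := fun i => (hZm i).neg
  have hZ'indep : iIndepFun Z' P :=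
    hZindep.comp (fun _ => fun x : ℝ => -x) (fun _ => measurable_neg)
  have hZ'bd : ∀ i ω, |Z' i ω| ≤ 2 * ρ := fun i ω => by
    rw [hZ'def]; dsimp only; rw [abs_neg]; exact hZbd i ω
  have hZ'mean : ∀ i, ∫ ω, Z' i ω ∂P = 0 := fun i => by
    rw [hZ'def]; dsimp only; rw [integral_neg, hZmean i, neg_zero]
  have hZ'var : ∀ i, ∫ ω, (Z' i ω) ^ 2 ∂P ≤ v := fun i => by
    rw [hZ'def]; dsimp only; simpa using hZvar i
  -- apply the Chernoff bound
  set t : ℝ := c * s with htdef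
  have ht0 : 0 ≤ t := by positivity
  have hA := bernstein_chernoff P Z hZm hZindep (b := 2 * ρ) (v := v)
    (by positivity) hv1 hZbd hZmean hZvar ht0
  have hB := bernstein_chernoff P Z' hZ'm hZ'indep (b := 2 * ρ) (v := v)
    (by positivity) hv1 hZ'bd hZ'mean hZ'var ht0
  -- the exponent is at least 4 log n
  have hmin : 4 * L ≤ (n:ℝ) * min (t ^ 2 / (8 * v)) (t / (2 * (2 * ρ))) := by
    have hss : s * s = L / (n:ℝ) := by rw [← sq]; exact hs_sq
    have e1 : (n:ℝ) * (t ^ 2 / (8 * v)) = c ^ 2 * L / (8 * v) := by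
      rw [htdef, mul_pow, hs_sq]
      field_simp
    have e2 : (n:ℝ) * (t / (2 * (2 * ρ))) = c * L / 4 := by
      rw [htdef, hρinv]
      have hstep : c * s / (2 * (2 * (1 / s))) = c * (s * s) / 4 := by
        field_simp
        ring
      rw [hstep, hss]
      field_simp
      try ring
    rcases min_cases (t ^ 2 / (8 * v)) (t / (2 * (2 * ρ))) with ⟨hmeq, _⟩ | ⟨hmeq, _⟩ <;>
      rw [hmeq]
    · rw [show (n:ℝ) * (t ^ 2 / (8 * v)) = c ^ 2 * L / (8 * v) from e1,
        le_div_iff₀ (by positivity)]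
      have hcv : 32 * v ≤ c ^ 2 := by
        have h1 : c ^ 2 = 1024 * v ^ 2 + 1024 * v + 256 := by rw [hcdef]; ring
        linarith [sq_nonneg v, hv1, h1]
      have h32 : 32 * v * L ≤ c ^ 2 * L := mul_le_mul_of_nonneg_right hcv hL0.le
      calc 4 * L * (8 * v) = 32 * v * L := by ring
        _ ≤ c ^ 2 * L := h32
    · rw [show (n:ℝ) * (t / (2 * (2 * ρ))) = c * L / 4 from e2]
      have h16 : 16 * L ≤ c * L := mul_le_mul_of_nonneg_right hc16 hL0.le
      calc 4 * L = 16 * L / 4 := by ring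
        _ ≤ c * L / 4 := by
            exact (div_le_div_iff_of_pos_right (by norm_num)).2 h16
  have hexp4 : Real.exp (-((n:ℝ) * min (t ^ 2 / (8 * v)) (t / (2 * (2 * ρ)))))
      ≤ 1 / (n:ℝ) ^ 4 := by
    have h1 : Real.exp (-((n:ℝ) * min (t ^ 2 / (8 * v)) (t / (2 * (2 * ρ)))))
        ≤ Real.exp (-(4 * L)) := by
      rw [Real.exp_le_exp]; linarith
    have h2 : Real.exp (-(4 * L)) = 1 / (n:ℝ) ^ 4 := by
      rw [show (4:ℝ) * L = ((4:ℕ):ℝ) * L by norm_num, Real.exp_neg,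
        Real.exp_nat_mul, hLdef, Real.exp_log hn0]
      norm_num
    linarith
  -- tail bounds in ℝ≥0∞
  have hPA : P {ω | (n:ℝ) * t ≤ ∑ i, Z i ω} ≤ ENNReal.ofReal (1 / (n:ℝ) ^ 4) :=
    (ENNReal.le_ofReal_iff_toReal_le (measure_ne_top P _) (by positivity)).2
      (hA.trans hexp4)
  have hPB : P {ω | (n:ℝ) * t ≤ ∑ i, Z' i ω} ≤ ENNReal.ofReal (1 / (n:ℝ) ^ 4) :=
    (ENNReal.le_ofReal_iff_toReal_le (measure_ne_top P _) (by positivity)).2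
      (hB.trans hexp4)
  -- inclusion of the event
  have hsub : {ω | (v + c) * s
        ≤ |(1 / (n : ℝ)) * (∑ i,
              if |(f (Xs i ω) * Us i ω + Vs i ω) ^ 2 * Ψ (Xs i ω)| ≤ ρ
                then (f (Xs i ω) * Us i ω + Vs i ω) ^ 2 * Ψ (Xs i ω)
                else 0) - β|}
      ⊆ {ω | (n:ℝ) * t ≤ ∑ i, Z i ω} ∪ {ω | (n:ℝ) * t ≤ ∑ i, Z' i ω} := by
    intro ω hω
    simp only [Set.mem_setOf_eq] at hω
    have hsum : (∑ i, (if |(f (Xs i ω) * Us i ω + Vs i ω) ^ 2 * Ψ (Xs i ω)| ≤ ρ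
          then (f (Xs i ω) * Us i ω + Vs i ω) ^ 2 * Ψ (Xs i ω) else 0))
        = (∑ i, Z i ω) + (n:ℝ) * μT := by
      have : ∀ i : Fin n, (if |(f (Xs i ω) * Us i ω + Vs i ω) ^ 2 * Ψ (Xs i ω)| ≤ ρ
          then (f (Xs i ω) * Us i ω + Vs i ω) ^ 2 * Ψ (Xs i ω) else 0)
          = Z i ω + μT := by
        intro i
        rw [hZdef]; dsimp only; rw [hgdef]; dsimp only; rw [hwdef]
        ring
      rw [Finset.sum_congr rfl (fun i _ => this i), Finset.sum_add_distrib,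
        Finset.sum_const, Finset.card_univ, Fintype.card_fin, nsmul_eq_mul]
    rw [hsum] at hω
    set SZ : ℝ := ∑ i, Z i ω with hSZdef
    have hβW : β = ∫ ω, W0 ω ∂P := hmean.symm
    have harith : (1 / (n:ℝ)) * (SZ + (n:ℝ) * μT) - β
        = SZ / n + (μT - ∫ ω, W0 ω ∂P) := by
      rw [← hβW]; field_simp; ring
    rw [harith] at hω
    have habs : |SZ / n + (μT - ∫ ω, W0 ω ∂P)| ≤ |SZ| / n + M * s := by
      calc |SZ / n + (μT - ∫ ω, W0 ω ∂P)| ≤ |SZ / n| + |μT - ∫ ω, W0 ω ∂P| :=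
          abs_add_le _ _
        _ ≤ |SZ| / n + M * s := by
            rw [abs_div, abs_of_pos hn0]
            exact add_le_add le_rfl hbias
    have hMv : M * s ≤ v * s := by
      have : M ≤ v := by rw [hvdef]; linarith
      exact mul_le_mul_of_nonneg_right this hs0.le
    have hkey : (n:ℝ) * t ≤ |SZ| := by
      have h1 : (v + c) * s ≤ |SZ| / n + v * s := by
        calc (v + c) * s ≤ |SZ| / n + M * s := le_trans hω habs
          _ ≤ |SZ| / n + v * s := by linarith
      have h2 : c * s ≤ |SZ| / n := by linarith [mul_comm v s]
      rw [htdef]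
      calc (n:ℝ) * (c * s) ≤ (n:ℝ) * (|SZ| / n) :=
          mul_le_mul_of_nonneg_left h2 hn0.le
        _ = |SZ| := by field_simp
    rcases le_or_gt ((n:ℝ) * t) SZ with h | h
    · exact Or.inl h
    · right
      simp only [Set.mem_setOf_eq, hZ'def]
      rw [Finset.sum_neg_distrib]
      rcases abs_cases SZ with ⟨heq, _⟩ | ⟨heq, _⟩
      · rw [heq] at hkey; linarith
      · rw [heq] at hkey; rw [← hSZdef]; linarith
  calc P {ω | (v + c) * s
        ≤ |(1 / (n : ℝ)) * (∑ i,
              if |(f (Xs i ω) * Us i ω + Vs i ω) ^ 2 * Ψ (Xs i ω)| ≤ ρ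
                then (f (Xs i ω) * Us i ω + Vs i ω) ^ 2 * Ψ (Xs i ω)
                else 0) - β|}
      ≤ P ({ω | (n:ℝ) * t ≤ ∑ i, Z i ω} ∪ {ω | (n:ℝ) * t ≤ ∑ i, Z' i ω}) :=
        measure_mono hsub
    _ ≤ P {ω | (n:ℝ) * t ≤ ∑ i, Z i ω} + P {ω | (n:ℝ) * t ≤ ∑ i, Z' i ω} :=
        measure_union_le _ _
    _ ≤ ENNReal.ofReal (1 / (n:ℝ) ^ 4) + ENNReal.ofReal (1 / (n:ℝ) ^ 4) :=
        add_le_add hPA hPB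
    _ = ENNReal.ofReal (2 / (n:ℝ) ^ 4) := by
        rw [← ENNReal.ofReal_add (by positivity) (by positivity)]
        congr 1
        ring
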